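/- Let P=(I,V,E) be an iSOPAG and D⊆I∪V. Then there exists a partial order ≺ on the buckets of the induced subgraph P_D such that for all distinct buckets 𝔸,𝔹 of P_D with 𝔸⊆PoAn_{P_D}(𝔹) one has 𝔸≺𝔹. In particular, for distinct buckets 𝔸,𝔹 of P_D, it cannot happen simultaneously that a potentially directed path runs from a node of 𝔸 to a node of 𝔹 and a potentially directed path runs from a node of 𝔹 to a node of 𝔸. -/

import Mathlib

noncomputable section
open Classical

/-- Edge-endpoint marks: tail `−`, arrowhead `>`, or circle `∘`. -/
inductive Mark : Type
  | tail
  | arrow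
  | circle
  deriving DecidableEq

/-- A mixed graph with input nodes over a node type `N`, as raw data.
`mark a b` is the mark at `a` on the (unique) edge between `a` and `b`,
or `none` if there is no edge between `a` and `b`. -/
structure MixedGraph (N : Type) where
  inputs : Set N
  outputs : Set N
  mark : N → N → Option Mark

namespace MixedGraph

variable {N N' : Type}

/-- All nodes of the graph. -/
def nodes (G : MixedGraph N) : Set N := G.inputs ∪ G.outputs

/-- `a` and `b` are adjacent (joined by an edge). -/
def adj (G : MixedGraph N) (a b : N) : Prop := (G.mark a b).isSome

/-- Directed edge `a → b`: tail at `a`, arrowhead at `b`. -/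
def dir (G : MixedGraph N) (a b : N) : Prop :=
  G.mark a b = some Mark.tail ∧ G.mark b a = some Mark.arrow

/-- Bidirected edge `a ↔ b`. -/
def bidir (G : MixedGraph N) (a b : N) : Prop :=
  G.mark a b = some Mark.arrow ∧ G.mark b a = some Mark.arrow

/-- Undirected edge `a − b`. -/
def undir (G : MixedGraph N) (a b : N) : Prop :=
  G.mark a b = some Mark.tail ∧ G.mark b a = some Mark.tail

/-- Edge `a ∘→ b`: circle at `a`, arrowhead at `b`. -/
def circArrow (G : MixedGraph N) (a b : N) : Prop :=
  G.mark a b = some Mark.circle ∧ G.mark b a = some Mark.arrow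

/-- Edge `a ∘−∘ b`: circles at both ends. -/
def circCirc (G : MixedGraph N) (a b : N) : Prop :=
  G.mark a b = some Mark.circle ∧ G.mark b a = some Mark.circle

/-- Edge `a ∘− b`: circle at `a`, tail at `b`. -/
def circTail (G : MixedGraph N) (a b : N) : Prop :=
  G.mark a b = some Mark.circle ∧ G.mark b a = some Mark.tail

/-- Edge `a −∘ b`: tail at `a`, circle at `b`. -/
def tailCirc (G : MixedGraph N) (a b : N) : Prop :=
  G.mark a b = some Mark.tail ∧ G.mark b a = some Mark.circle

/-- Some edge of `G` carries an arrowhead at `a`. -/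
def arrowAt (G : MixedGraph N) (a : N) : Prop :=
  ∃ b, G.mark a b = some Mark.arrow

/-- `a` is an ancestor of `b`: `a = b` or a directed path `a → ⋯ → b` exists. -/
def anc (G : MixedGraph N) : N → N → Prop := Relation.ReflTransGen G.dir

/-- The ancestors of a set `S` of nodes. -/
def ancSet (G : MixedGraph N) (S : Set N) : Set N := {a | ∃ s ∈ S, G.anc a s}

/-- Potentially directed edge from `a` towards `b`: an edge with no arrowhead at its
earlier endpoint `a` and no tail at its later endpoint `b`. -/
def potDir (G : MixedGraph N) (a b : N) : Prop :=
  G.adj a b ∧ G.mark a b ≠ some Mark.arrow ∧ G.mark b a ≠ some Mark.tail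

/-- `a` is a possible ancestor of `b`: `a = b` or a potentially directed path runs
from `a` to `b`. -/
def poAn (G : MixedGraph N) : N → N → Prop := Relation.ReflTransGen G.potDir

/-- The possible ancestors of a set `S` of nodes. -/
def poAnSet (G : MixedGraph N) (S : Set N) : Set N := {a | ∃ s ∈ S, G.poAn a s}

/-- Well-formedness of a mixed graph with input nodes: inputs and outputs are disjoint
finite sets, edges are symmetric and irreflexive and join nodes of the graph. -/
def WF (G : MixedGraph N) : Prop :=
  Disjoint G.inputs G.outputs ∧ G.inputs.Finite ∧ G.outputs.Finite ∧
  (∀ a b, (G.mark a b).isSome → (G.mark b a).isSome) ∧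
  (∀ a, G.mark a a = none) ∧
  (∀ a b, (G.mark a b).isSome → a ∈ G.nodes ∧ b ∈ G.nodes)

/-- The induced subgraph of `G` over the node set `A`. -/
def induce (G : MixedGraph N) (A : Set N) : MixedGraph N where
  inputs := G.inputs ∩ A
  outputs := G.outputs ∩ A
  mark := fun a b => if a ∈ A ∧ b ∈ A then G.mark a b else none

/-- Transport a mixed graph over `N` to one over `N ⊕ N'` along `Sum.inl`. -/
def sumInl (G : MixedGraph N) : MixedGraph (N ⊕ N') where
  inputs := Sum.inl '' G.inputs
  outputs := Sum.inl '' G.outputs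
  mark := fun x y =>
    match x, y with
    | Sum.inl a, Sum.inl b => G.mark a b
    | _, _ => none

/-- `G` is a subgraph of `H`: its nodes and marked edges are among those of `H`. -/
def Subgraph (G H : MixedGraph N) : Prop :=
  G.inputs ⊆ H.inputs ∧ G.outputs ⊆ H.outputs ∧
  ∀ a b m, G.mark a b = some m → H.mark a b = some m

end MixedGraph

/-- A walk in `G` with `len` edges, visiting the nodes `f 0, …, f len`
(consecutive nodes are adjacent). -/
structure GWalk {N : Type} (G : MixedGraph N) where
  len : ℕ
  f : ℕ → N
  hadj : ∀ i < len, G.adj (f i) (f (i + 1))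

namespace GWalk

variable {N : Type} {G : MixedGraph N}

/-- The first node of the walk. -/
def first (w : GWalk G) : N := w.f 0

/-- The last node of the walk. -/
def last (w : GWalk G) : N := w.f w.len

/-- The walk is a path: no repeated nodes. -/
def IsPath (w : GWalk G) : Prop :=
  ∀ i ≤ w.len, ∀ j ≤ w.len, w.f i = w.f j → i = j

/-- The (interior) node at position `i` is a collider on the walk: both incident
edges carry arrowheads at it. -/
def ColliderAt (w : GWalk G) (i : ℕ) : Prop :=
  G.mark (w.f i) (w.f (i - 1)) = some Mark.arrow ∧
  G.mark (w.f i) (w.f (i + 1)) = some Mark.arrow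

end GWalk

namespace MixedGraph

variable {N : Type}

/-- `w` is an `(L,S)`-inducing walk: every non-endnode is in `L` or a collider, and
every collider lies in `Anc({first, last} ∪ S)`. -/
def InducingWalk (G : MixedGraph N) (L S : Set N) (w : GWalk G) : Prop :=
  (∀ i, 0 < i → i < w.len → w.f i ∈ L ∨ w.ColliderAt i) ∧
  (∀ i, 0 < i → i < w.len → w.ColliderAt i →
    w.f i ∈ G.ancSet ({w.first, w.last} ∪ S))

/-- There is an `(L,S)`-inducing walk from `a` to `b` in `G`. -/
def InducingWalkBtw (G : MixedGraph N) (L S : Set N) (a b : N) : Prop :=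
  ∃ w : GWalk G, w.first = a ∧ w.last = b ∧ G.InducingWalk L S w

/-- There is an `(L,S)`-inducing path from `a` to `b` in `G`. -/
def InducingPathBtw (G : MixedGraph N) (L S : Set N) (a b : N) : Prop :=
  ∃ w : GWalk G, w.IsPath ∧ w.first = a ∧ w.last = b ∧ G.InducingWalk L S w

/-- `G` is an iADMG: all edges directed or bidirected, no directed cycles, no
arrowheads at input nodes, and no edges between two input nodes. -/
def IsIADMG (G : MixedGraph N) : Prop :=
  G.WF ∧
  (∀ a b, G.adj a b → G.dir a b ∨ G.dir b a ∨ G.bidir a b) ∧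
  (∀ a b, G.dir a b → ¬ G.anc b a) ∧
  (∀ a ∈ G.inputs, ∀ b, G.mark a b ≠ some Mark.arrow) ∧
  (∀ a ∈ G.inputs, ∀ b ∈ G.inputs, ¬ G.adj a b)

/-- `G` is an iPAG. -/
def IsIPAG (G : MixedGraph N) : Prop :=
  G.WF ∧
  (∀ a ∈ G.inputs, ∀ b, G.mark a b ≠ some Mark.arrow) ∧
  (∀ a ∈ G.inputs, ∀ b ∈ G.inputs, ¬ G.adj a b) ∧
  (∀ a b, G.dir a b → ¬ G.anc b a) ∧
  (∀ a b, G.anc a b → ¬ G.bidir b a) ∧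
  (∀ a b c, G.mark b a = some Mark.arrow → ¬ G.undir b c) ∧
  (∀ a b, a ≠ b → a ∈ G.nodes → b ∈ G.nodes → ¬ G.adj a b →
    ¬ G.InducingPathBtw ∅ ∅ a b)

/-- `G` is an iMAG: an iPAG with no circle marks. -/
def IsIMAG (G : MixedGraph N) : Prop :=
  G.IsIPAG ∧ ∀ a b, G.mark a b ≠ some Mark.circle

/-- The visibility condition for a directed edge `a → b` of `G`: either `a` is an
input node, or some node `c` not adjacent to `b` satisfies `c *→ a`, or there is a
path `c *→ v₁ ↔ ⋯ ↔ v_{n−1} ↔ a` (`n ≥ 2`) with every `vᵢ` a parent of `b`. -/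
def VisibleCond (G : MixedGraph N) (a b : N) : Prop :=
  a ∈ G.inputs ∨
  ∃ c, c ≠ b ∧ ¬ G.adj c b ∧
    (G.mark a c = some Mark.arrow ∨
      ∃ w : GWalk G, w.IsPath ∧ 2 ≤ w.len ∧ w.first = c ∧ w.last = a ∧
        G.mark (w.f 1) (w.f 0) = some Mark.arrow ∧
        (∀ i, 1 ≤ i → i < w.len → G.bidir (w.f i) (w.f (i + 1))) ∧
        (∀ i, 1 ≤ i → i < w.len → G.dir (w.f i) b))

/-- `a → b` is a visible directed edge of `G`. -/
def VisibleDir (G : MixedGraph N) (a b : N) : Prop :=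
  G.dir a b ∧ G.VisibleCond a b

/-- `a` and `b` are in the same bucket of `G`: some path between them carries no
arrowhead mark on any of its edges. -/
def SameBucket (G : MixedGraph N) (a b : N) : Prop :=
  ∃ w : GWalk G, w.IsPath ∧ w.first = a ∧ w.last = b ∧
    ∀ i < w.len, G.mark (w.f i) (w.f (i + 1)) ≠ some Mark.arrow ∧
      G.mark (w.f (i + 1)) (w.f i) ≠ some Mark.arrow

end MixedGraph

/-- An isADMG: an iADMG together with its set `sel` of latent selection nodes.
The observed output nodes are `graph.outputs \ sel`. -/
structure SADMG (N : Type) where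
  graph : MixedGraph N
  sel : Set N

namespace SADMG

/-- Well-formedness of an isADMG. -/
def WF {N : Type} (A : SADMG N) : Prop :=
  A.graph.IsIADMG ∧ A.sel ⊆ A.graph.outputs

/-- The observed output nodes `O`. -/
def obs {N : Type} (A : SADMG N) : Set N := A.graph.outputs \ A.sel

end SADMG

/-- An ilsADMG: an iADMG together with its sets of latent output nodes and of
latent selection nodes.  The observed output nodes are the remaining outputs. -/
structure LSADMG (N : Type) where
  graph : MixedGraph N
  latent : Set N
  sel : Set N

namespace LSADMG

/-- Well-formedness of an ilsADMG. -/
def WF {N : Type} (A : LSADMG N) : Prop :=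
  A.graph.IsIADMG ∧ A.latent ⊆ A.graph.outputs ∧ A.sel ⊆ A.graph.outputs ∧
  Disjoint A.latent A.sel

/-- The observed output nodes `O`. -/
def obs {N : Type} (A : LSADMG N) : Set N := A.graph.outputs \ (A.latent ∪ A.sel)

end LSADMG

/-- An iPAG/iMAG `P` represents the isADMG `A`: nodes match; adjacency in `P`
corresponds exactly to `S`-inducing paths in `A` (with no edges inside the inputs);
arrowheads at `a` imply `a ∉ Anc_A({b} ∪ S)`; tails at `a` imply `a ∈ Anc_A({b} ∪ S)`. -/
def RepresentsS {N : Type} (P : MixedGraph N) (A : SADMG N) : Prop :=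
  P.inputs = A.graph.inputs ∧
  P.outputs = A.obs ∧
  (∀ a b, a ≠ b → a ∈ P.nodes → b ∈ P.nodes →
    (P.adj a b ↔
      (¬(a ∈ P.inputs ∧ b ∈ P.inputs) ∧ A.graph.InducingPathBtw ∅ A.sel a b))) ∧
  (∀ a b, P.mark a b = some Mark.arrow → a ∉ A.graph.ancSet ({b} ∪ A.sel)) ∧
  (∀ a b, P.mark a b = some Mark.tail → a ∈ A.graph.ancSet ({b} ∪ A.sel))

/-- An iPAG/iMAG `P` `(L,S)`-represents the ilsADMG `A`. -/
def RepresentsLS {N : Type} (P : MixedGraph N) (A : LSADMG N) : Prop :=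
  P.inputs = A.graph.inputs ∧
  P.outputs = A.obs ∧
  (∀ a b, a ≠ b → a ∈ P.nodes → b ∈ P.nodes →
    (P.adj a b ↔
      (¬(a ∈ P.inputs ∧ b ∈ P.inputs) ∧ A.graph.InducingPathBtw A.latent A.sel a b))) ∧
  (∀ a b, P.mark a b = some Mark.arrow → a ∉ A.graph.ancSet ({b} ∪ A.sel)) ∧
  (∀ a b, P.mark a b = some Mark.tail → a ∈ A.graph.ancSet ({b} ∪ A.sel))

/-- The explicit candidate for `MAG(A)` of an ilsADMG `A`: input nodes `I`, output
nodes `O`; distinct `a,b ∈ I ∪ O` adjacent iff `{a,b} ⊄ I` and there is an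
`(L,S)`-inducing path between them in `A`; the mark at `a` on each edge is a tail
if `a ∈ Anc_A({b} ∪ S)` and an arrowhead otherwise. -/
def magOfLS {N : Type} (A : LSADMG N) : MixedGraph N where
  inputs := A.graph.inputs
  outputs := A.obs
  mark := fun a b =>
    if a ≠ b ∧ a ∈ A.graph.inputs ∪ A.obs ∧ b ∈ A.graph.inputs ∪ A.obs ∧
        ¬(a ∈ A.graph.inputs ∧ b ∈ A.graph.inputs) ∧
        A.graph.InducingPathBtw A.latent A.sel a b then
      (if a ∈ A.graph.ancSet ({b} ∪ A.sel) then some Mark.tail else some Mark.arrow)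
    else none

/-- A walk is `C`-open (in a graph without circle marks): its endnodes are not in
`C`, no non-collider on it is in `C`, and every collider on it is in `Anc(C)`. -/
def COpen {N : Type} (H : MixedGraph N) (C : Set N) (w : GWalk H) : Prop :=
  w.first ∉ C ∧ w.last ∉ C ∧
  ∀ i, 0 < i → i < w.len →
    (¬ w.ColliderAt i → w.f i ∉ C) ∧ (w.ColliderAt i → w.f i ∈ H.ancSet C)

/-- `A` is id-separated from `B` given `C` in `H` (graphs without circle marks):
every path/walk from a node of `A` to a node of `B ∪ inputs` is not `C`-open. -/
def IdSepSimple {N : Type} (H : MixedGraph N) (A B C : Set N) : Prop :=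
  ∀ w : GWalk H, w.first ∈ A → w.last ∈ B ∪ H.inputs → ¬ COpen H C w

/-- A walk in a manipulated graph `H` (with set `DI` of regime input nodes) is
`C`-id-open. -/
def IdOpen {N : Type} (H : MixedGraph N) (DI C : Set N) (w : GWalk H) : Prop :=
  w.first ∉ C ∧ w.last ∉ C ∧
  ∀ i, 0 < i → i < w.len →
    (w.f i ∉ C ∧ (H.mark (w.f i) (w.f (i - 1)) = some Mark.tail ∨
        H.mark (w.f i) (w.f (i + 1)) = some Mark.tail)) ∨
    (w.f i ∉ C ∧ H.mark (w.f i) (w.f (i - 1)) = some Mark.circle ∧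
        H.mark (w.f i) (w.f (i + 1)) = some Mark.circle ∧
        ¬ H.adj (w.f (i - 1)) (w.f (i + 1))) ∨
    (w.ColliderAt i ∧ w.f (i - 1) ∉ DI ∧ w.f i ∉ DI ∧ w.f (i + 1) ∉ DI ∧
        w.f i ∈ H.ancSet C) ∨
    (w.ColliderAt i ∧ ¬(w.f (i - 1) ∉ DI ∧ w.f i ∉ DI ∧ w.f (i + 1) ∉ DI) ∧
        w.f i ∈ H.poAnSet (C ∩ H.outputs)) ∨
    (w.f (i - 1) ∈ DI ∧ H.mark (w.f i) (w.f (i - 1)) = some Mark.circle ∧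
        H.mark (w.f i) (w.f (i + 1)) = some Mark.arrow ∧
        w.f i ∈ H.poAnSet (C ∩ H.outputs)) ∨
    (w.f (i + 1) ∈ DI ∧ H.mark (w.f i) (w.f (i - 1)) = some Mark.arrow ∧
        H.mark (w.f i) (w.f (i + 1)) = some Mark.circle ∧
        w.f i ∈ H.poAnSet (C ∩ H.outputs))

/-- `A` is id-separated from `B` given `C` in the manipulated graph `H`, whose set
of regime input nodes is `DI`: every path/walk from a node of `A` to a node of
`B ∪ inputs` is not `C`-id-open. -/
def IdSep {N : Type} (H : MixedGraph N) (DI A B C : Set N) : Prop :=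
  ∀ w : GWalk H, w.first ∈ A → w.last ∈ B ∪ H.inputs → ¬ IdOpen H DI C w

/-- Hard manipulation `do(T)` of an isADMG-type graph: reclassify the nodes of `T`
as input nodes and delete every edge with an arrowhead at a node of `T`. -/
def admgHardManip {N : Type} (G : MixedGraph N) (T : Set N) : MixedGraph N where
  inputs := G.inputs ∪ (T ∩ G.outputs)
  outputs := G.outputs \ T
  mark := fun x y =>
    if (x ∈ T ∧ G.mark x y = some Mark.arrow) ∨
        (y ∈ T ∧ G.mark y x = some Mark.arrow) then none
    else G.mark x y

/-- Soft manipulation `do(I_D)` of an isADMG-type graph: add a fresh input node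
`I_d = Sum.inr d` and the directed edge `I_d → d` for each `d ∈ D`. -/
def admgSoftManip {N : Type} (G : MixedGraph N) (D : Set N) : MixedGraph (N ⊕ N) where
  inputs := Sum.inl '' G.inputs ∪ Sum.inr '' D
  outputs := Sum.inl '' G.outputs
  mark := fun x y =>
    match x, y with
    | Sum.inl a, Sum.inl b => G.mark a b
    | Sum.inr d, Sum.inl a => if d ∈ D ∧ a = d then some Mark.tail else none
    | Sum.inl a, Sum.inr d => if d ∈ D ∧ a = d then some Mark.arrow else none
    | Sum.inr _, Sum.inr _ => none

/-- Soft manipulation of an isADMG. -/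
def SADMG.softManip {N : Type} (A : SADMG N) (D : Set N) : SADMG (N ⊕ N) where
  graph := admgSoftManip A.graph D
  sel := Sum.inl '' A.sel

/-- Hard manipulation `do(T)` of an iMAG-type graph: input nodes `I ∪ (T ∩ V)`,
output nodes `V \ T`; delete all edges with an arrowhead at a node of `T \ I` and
all edges between two nodes of `T ∪ I`. -/
def magHardManip {N : Type} (G : MixedGraph N) (T : Set N) : MixedGraph N where
  inputs := G.inputs ∪ (T ∩ G.outputs)
  outputs := G.outputs \ T
  mark := fun x y =>
    if (x ∈ T ∧ x ∉ G.inputs ∧ G.mark x y = some Mark.arrow) ∨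
        (y ∈ T ∧ y ∉ G.inputs ∧ G.mark y x = some Mark.arrow) ∨
        ((x ∈ T ∨ x ∈ G.inputs) ∧ (y ∈ T ∨ y ∈ G.inputs)) then none
    else G.mark x y

/-- The mark at node `y` on the new edge between the regime node `I_a = Sum.inr a`
and `y` in the soft manipulation of an iMAG-type graph `G` over `N ⊕ N`
(`none` if there is no such edge): `I_a → a` if some edge of `G` has an arrowhead
at `a`; `I_a − a` if some undirected edge is at `a`; `I_a −∘ a` otherwise;
`I_a → b` for every output `b` with `a → b` invisible; `I_a − b` for every output
`b` with `a − b` in `G`. -/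
def magSoftTarget {N : Type} (G : MixedGraph (N ⊕ N)) (a : N) (y : N ⊕ N) : Option Mark :=
  if y = Sum.inl a then
    (if G.arrowAt (Sum.inl a) then some Mark.arrow
     else if ∃ c, G.undir (Sum.inl a) c then some Mark.tail
     else some Mark.circle)
  else if y ∈ G.outputs ∧ G.dir (Sum.inl a) y ∧ ¬ G.VisibleCond (Sum.inl a) y then
    some Mark.arrow
  else if y ∈ G.outputs ∧ G.undir (Sum.inl a) y then some Mark.tail
  else none

/-- The mark at node `y` on the new edge between the regime node `I_a = Sum.inr a`
and `y` in the soft manipulation of an iPAG-type graph `G` over `N ⊕ N`. -/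
def pagSoftTarget {N : Type} (G : MixedGraph (N ⊕ N)) (a : N) (y : N ⊕ N) : Option Mark :=
  if y = Sum.inl a then
    (if G.arrowAt (Sum.inl a) then some Mark.arrow
     else if ∃ c, G.undir (Sum.inl a) c then some Mark.tail
     else some Mark.circle)
  else if y ∈ G.outputs ∧ ((G.dir (Sum.inl a) y ∧ ¬ G.VisibleCond (Sum.inl a) y) ∨
      G.circArrow (Sum.inl a) y) then some Mark.arrow
  else if y ∈ G.outputs ∧ (G.undir (Sum.inl a) y ∨
      (G.circTail (Sum.inl a) y ∧ ∃ c, G.undir c y)) then some Mark.tail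
  else if y ∈ G.outputs ∧ (G.tailCirc (Sum.inl a) y ∨ G.circCirc (Sum.inl a) y ∨
      (G.circTail (Sum.inl a) y ∧ ¬ ∃ c, G.undir c y)) then some Mark.circle
  else none

/-- Generic soft-manipulation step on a graph over `N ⊕ N`: for each `a ∈ A` not
already an input, the regime node `I_a = Sum.inr a` is added as an input node,
with edges (and end marks) prescribed by `target`; the mark at `I_a` on each new
edge is a tail. -/
def softManipStep {N : Type}
    (target : MixedGraph (N ⊕ N) → N → (N ⊕ N) → Option Mark)
    (G : MixedGraph (N ⊕ N)) (A : Set N) : MixedGraph (N ⊕ N) where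
  inputs := G.inputs ∪ Sum.inr '' {a | a ∈ A ∧ Sum.inl a ∉ G.inputs}
  outputs := G.outputs
  mark := fun x y =>
    match x, y with
    | Sum.inr a, Sum.inr b =>
        if a ∈ A ∧ Sum.inl a ∉ G.inputs then
          (if (target G a (Sum.inr b)).isSome then some Mark.tail else none)
        else if b ∈ A ∧ Sum.inl b ∉ G.inputs then target G b (Sum.inr a)
        else G.mark x y
    | Sum.inr a, Sum.inl v =>
        if a ∈ A ∧ Sum.inl a ∉ G.inputs then
          (if (target G a (Sum.inl v)).isSome then some Mark.tail else none)
        else G.mark x y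
    | Sum.inl v, Sum.inr a =>
        if a ∈ A ∧ Sum.inl a ∉ G.inputs then target G a (Sum.inl v)
        else G.mark x y
    | Sum.inl _, Sum.inl _ => G.mark x y

/-- Soft-manipulation step for iMAG-type graphs over `N ⊕ N`. -/
def magSoftManipStep {N : Type} (G : MixedGraph (N ⊕ N)) (A : Set N) :
    MixedGraph (N ⊕ N) :=
  softManipStep magSoftTarget G A

/-- The soft-manipulated iMAG `M_{do(I_A)}`, over node type `N ⊕ N`. -/
def magSoftManip {N : Type} (M : MixedGraph N) (A : Set N) : MixedGraph (N ⊕ N) :=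
  magSoftManipStep M.sumInl A

/-- The soft-manipulated iPAG `P_{do(I_A)}`, over node type `N ⊕ N`. -/
def pagSoftManip {N : Type} (P : MixedGraph N) (A : Set N) : MixedGraph (N ⊕ N) :=
  softManipStep pagSoftTarget P.sumInl A

/-- Hard manipulation `do(T)` of an iPAG-type graph: as for iMAGs, but in addition
every remaining circle mark at a manipulated node is replaced by a tail. -/
def pagHardManip {N : Type} (G : MixedGraph N) (T : Set N) : MixedGraph N where
  inputs := G.inputs ∪ T
  outputs := G.outputs \ T
  mark := fun x y =>
    if (x ∈ T ∧ x ∉ G.inputs ∧ G.mark x y = some Mark.arrow) ∨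
        (y ∈ T ∧ y ∉ G.inputs ∧ G.mark y x = some Mark.arrow) ∨
        ((x ∈ T ∨ x ∈ G.inputs) ∧ (y ∈ T ∨ y ∈ G.inputs)) then none
    else if x ∈ T ∧ x ∉ G.inputs ∧ y ∈ G.outputs ∧ y ∉ T ∧
        G.mark x y = some Mark.circle then some Mark.tail
    else G.mark x y

/-- Orient all circle marks of `G` as tails. -/
def orientCirclesTails {N : Type} (G : MixedGraph N) : MixedGraph N :=
  { G with
    mark := fun x y =>
      (G.mark x y).map (fun m => if m = Mark.circle then Mark.tail else m) }

/-- There is a pc-connecting path from `a` to `b` in `G`: a single edge between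
`a` and `b` that is not a visible directed edge, or a path
`a *→ v₁ ↔ ⋯ ↔ v_{n−1} ←* b` (`n > 1`) none of whose edges is visible directed. -/
def PcConn {N : Type} (G : MixedGraph N) (a b : N) : Prop :=
  (G.adj a b ∧ ¬ G.VisibleDir a b ∧ ¬ G.VisibleDir b a) ∨
  (∃ w : GWalk G, w.IsPath ∧ 1 < w.len ∧ w.first = a ∧ w.last = b ∧
    G.mark (w.f 1) (w.f 0) = some Mark.arrow ∧
    G.mark (w.f (w.len - 1)) (w.f w.len) = some Mark.arrow ∧
    (∀ i, 1 ≤ i → i < w.len - 1 → G.bidir (w.f i) (w.f (i + 1))) ∧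
    (∀ i < w.len, ¬ G.VisibleDir (w.f i) (w.f (i + 1)) ∧
      ¬ G.VisibleDir (w.f (i + 1)) (w.f i)))

/-- The pc-component of `b` in `G`. -/
def pcSet {N : Type} (G : MixedGraph N) (b : N) : Set N := {a | PcConn G a b}

/-- The region of a set `B` in `G`: all nodes in the bucket of some node
pc-connected to a node of `B`. -/
def regionSet {N : Type} (G : MixedGraph N) (B : Set N) : Set N :=
  {a | ∃ b ∈ B, ∃ c, PcConn G c b ∧ G.SameBucket a c}

/-- `S` is a bucket of `G`. -/
def IsBucket {N : Type} (G : MixedGraph N) (S : Set N) : Prop :=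
  ∃ a ∈ G.nodes, S = {x | G.SameBucket x a}

/-- FCI rule R1 (closure form): if `k *→ j` with the edge between `j` and `i`
carrying a circle at `j`, `i` and `k` non-adjacent and `i` not an input node,
then that edge is `j → i`. -/
def FciR1 {N : Type} (P : MixedGraph N) : Prop :=
  ∀ i j k, P.mark j k = some Mark.arrow → ¬ P.adj i k → i ∉ P.inputs →
    P.mark j i = some Mark.circle → P.dir j i

/-- FCI rule R2 (closure form): if `i → j *→ k` or `i *→ j → k` with the edge
between `i` and `k` carrying a circle at `k`, then that edge has an arrowhead at `k`. -/
def FciR2 {N : Type} (P : MixedGraph N) : Prop :=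
  ∀ i j k, ((P.dir i j ∧ P.mark k j = some Mark.arrow) ∨
      (P.mark j i = some Mark.arrow ∧ P.dir j k)) →
    P.mark k i = some Mark.circle → P.mark k i = some Mark.arrow

/-- FCI rule R4 (closure form): for every discriminating path `⟨a,…,y,z⟩` for `y`,
the mark at `y` on the edge between `y` and `z` is not a circle. -/
def FciR4 {N : Type} (P : MixedGraph N) : Prop :=
  ∀ w : GWalk P, w.IsPath → 3 ≤ w.len → ¬ P.adj (w.f 0) (w.f w.len) →
    (∀ i, 0 < i → i < w.len - 1 → w.ColliderAt i ∧ P.dir (w.f i) (w.f w.len)) →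
    P.mark (w.f (w.len - 1)) (w.f w.len) ≠ some Mark.circle

/-- Property (P2) of iSOPAGs: no `a *→ b` together with `b −∘ c`, and no
`a *→ b` together with `b ∘− c`. -/
def SopagP2 {N : Type} (P : MixedGraph N) : Prop :=
  ∀ a b c, P.mark b a = some Mark.arrow → ¬ P.tailCirc b c ∧ ¬ P.circTail b c

/-- Property (P3) of iSOPAGs: if `a *→ b` and the edge between `b` and `c` has a
circle at `b`, then `a *→ c`. -/
def SopagP3 {N : Type} (P : MixedGraph N) : Prop :=
  ∀ a b c, P.mark b a = some Mark.arrow → P.mark b c = some Mark.circle →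
    P.mark c a = some Mark.arrow

/-- `P` is an iSOPAG: an iPAG representing some isADMG, closed under the FCI
orientation rules (R1, R2, R4), and satisfying (P2) and (P3). -/
def IsISOPAG {N : Type} (P : MixedGraph N) : Prop :=
  P.IsIPAG ∧ (∃ A : SADMG N, A.WF ∧ RepresentsS P A) ∧
  FciR1 P ∧ FciR2 P ∧ FciR4 P ∧ SopagP2 P ∧ SopagP3 P

section Stmt19Aux

open MixedGraph

variable {N : Type}

/-- A present non-arrow mark is a tail or a circle. -/
lemma stmt19_markCases {P : MixedGraph N} {x y : N}
    (hs : (P.mark x y).isSome) (hna : P.mark x y ≠ some Mark.arrow) :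
    P.mark x y = some Mark.tail ∨ P.mark x y = some Mark.circle := by
  cases h : P.mark x y with
  | none => simp [h] at hs
  | some m => cases m <;> simp_all

/-- The triangle lemma: from `p *→ q` and a circle at `q` towards `r`,
we get `p *→ r` with no arrowhead at `p`. -/
lemma stmt19_lemT {P : MixedGraph N} (hP : IsISOPAG P) {p q r : N}
    (h1 : P.mark q p = some Mark.arrow) (h2 : P.mark p q ≠ some Mark.arrow)
    (h2s : (P.mark p q).isSome) (h3 : P.mark q r = some Mark.circle) :
    P.mark p r ≠ some Mark.arrow ∧ P.mark r p = some Mark.arrow := by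
  have hP3 := hP.2.2.2.2.2.2
  have hR2 := hP.2.2.2.1
  have hrp : P.mark r p = some Mark.arrow := hP3 p q r h1 h3
  refine ⟨?_, hrp⟩
  intro hpr
  rcases stmt19_markCases h2s h2 with ht | hc
  · have := hR2 r p q (Or.inr ⟨hpr, ⟨ht, h1⟩⟩) h3
    rw [this] at h3
    simp at h3
  · have := hP3 r p q hpr hc
    rw [this] at h3
    simp at h3

/-- Main lemma: in an iSOPAG there is no closed walk all of whose edges have a
non-arrow mark at their earlier endpoint, yet which contains an edge with an
arrowhead at its later endpoint. -/
lemma stmt19_noQCycle {P : MixedGraph N} (hP : IsISOPAG P) :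
    ∀ (m : ℕ) (x y : N) (f : ℕ → N), f 0 = y → f m = x →
      (∀ i < m, (P.mark (f i) (f (i + 1))).isSome ∧
        P.mark (f i) (f (i + 1)) ≠ some Mark.arrow) →
      P.mark y x = some Mark.arrow → P.mark x y ≠ some Mark.arrow → False := by
  have hsym := hP.1.1.2.2.2.1
  have hirr := hP.1.1.2.2.2.2.1
  have hC := hP.1.2.2.2.1
  have hE := hP.1.2.2.2.2.2.1
  have hP2 := hP.2.2.2.2.2.1
  intro m
  induction m using Nat.strong_induction_on with
  | _ m IH =>
  intro x y f hf0 hfm hch hyx hxy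
  rcases Nat.eq_zero_or_pos m with hm | hm
  · subst hm
    have hxyeq : y = x := by rw [← hf0, hfm]
    subst hxyeq
    rw [hirr y] at hyx
    simp at hyx
  · -- the cycle v 0 = x, v (j+1) = f j
    set v : ℕ → N := fun j => if j = 0 then x else f (j - 1) with hv
    have hv0 : v 0 = x := by simp [hv]
    have hvs : ∀ k, v (k + 1) = f k := by intro k; simp [hv]
    have inner : ∀ t, ∀ j, j + t = m + 1 → 1 ≤ j →
        Relation.ReflTransGen P.dir y (v j) →
        P.mark (v j) (v (j - 1)) = some Mark.arrow →
        P.mark (v (j - 1)) (v j) ≠ some Mark.arrow → False := by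
      intro t
      induction t with
      | zero =>
        intro j hj hj1 hanc hK hK2
        have hjm : j = m + 1 := by omega
        subst hjm
        have hvx : v (m + 1) = x := by rw [hvs]; exact hfm
        rw [hvx] at hanc hK hK2
        have hs : (P.mark x y).isSome := hsym y x (by rw [hyx]; rfl)
        rcases stmt19_markCases hs hxy with ht | hc
        · exact hC x y ⟨ht, hyx⟩ hanc
        · obtain ⟨hnar, har⟩ :=
            stmt19_lemT hP hK hK2 (hsym _ _ (by rw [hK]; rfl)) hc
          refine IH (m - 1) (by omega) (v (m + 1 - 1)) y f hf0 ?_ ?_ har hnar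
          · obtain ⟨m', rfl⟩ : ∃ m', m = m' + 1 := ⟨m - 1, by omega⟩
            simpa using (hvs m').symm
          · intro i hi; exact hch i (by omega)
      | succ t ih =>
        intro j hj hj1 hanc hK hK2
        obtain ⟨k, rfl⟩ : ∃ k, j = k + 1 := ⟨j - 1, by omega⟩
        have hedge := hch k (by omega)
        have e1 : v (k + 1) = f k := hvs k
        have e2 : v (k + 2) = f (k + 1) := hvs (k + 1)
        have hQ1 : (P.mark (v (k + 1)) (v (k + 2))).isSome := by
          rw [e1, e2]; exact hedge.1
        have hQ2 : P.mark (v (k + 1)) (v (k + 2)) ≠ some Mark.arrow := by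
          rw [e1, e2]; exact hedge.2
        have hKk : P.mark (v (k + 1)) (v k) = some Mark.arrow := hK
        have hK2k : P.mark (v k) (v (k + 1)) ≠ some Mark.arrow := hK2
        rcases stmt19_markCases hQ1 hQ2 with ht | hc
        · have hs2 : (P.mark (v (k + 2)) (v (k + 1))).isSome := hsym _ _ hQ1
          cases hh : P.mark (v (k + 2)) (v (k + 1)) with
          | none => rw [hh] at hs2; simp at hs2
          | some mk =>
            cases mk with
            | arrow =>
              refine ih (k + 2) (by omega) (by omega)
                (hanc.tail ⟨ht, hh⟩) hh ?_
              show P.mark (v (k + 1)) (v (k + 2)) ≠ some Mark.arrow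
              rw [ht]; simp
            | tail => exact hE (v k) (v (k + 1)) (v (k + 2)) hKk ⟨ht, hh⟩
            | circle => exact (hP2 (v k) (v (k + 1)) (v (k + 2)) hKk).1 ⟨ht, hh⟩
        · obtain ⟨hnar, har⟩ :=
            stmt19_lemT hP hKk hK2k (hsym _ _ (by rw [hKk]; rfl)) hc
          rcases Nat.eq_zero_or_pos k with hk0 | hk1
          · subst hk0
            rw [hv0] at hnar har
            refine IH (m - 1) (by omega) x (f 1) (fun i => f (i + 1)) rfl ?_ ?_ ?_ ?_
            · show f (m - 1 + 1) = x
              have hm1 : m - 1 + 1 = m := by omega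
              rw [hm1]; exact hfm
            · intro i hi; exact hch (i + 1) (by omega)
            · rw [← hvs 1]; exact har
            · rw [← hvs 1]; exact hnar
          · set g : ℕ → N := fun i => if i ≤ k - 1 then f i else f (i + 1) with hg
            refine IH (m - 1) (by omega) x y g ?_ ?_ ?_ hyx hxy
            · simp [hg]; exact hf0
            · have hle : ¬ (m - 1 ≤ k - 1) := by omega
              have hm1 : m - 1 + 1 = m := by omega
              simp [hg, hle, hm1]; exact hfm
            · intro i hi
              by_cases h1 : i + 1 ≤ k - 1
              · have h2 : i ≤ k - 1 := by omega
                simpa [hg, h1, h2] using hch i (by omega)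
              · by_cases h2 : i ≤ k - 1
                · have hki : i = k - 1 := by omega
                  have hgi : g i = f (k - 1) := by simp [hg, h2, hki]
                  have hgi1 : g (i + 1) = f (k + 1) := by
                    simp [hg, h1]
                    congr 1
                    omega
                  rw [hgi, hgi1]
                  have evk : v k = f (k - 1) := by
                    obtain ⟨k', rfl⟩ : ∃ k', k = k' + 1 := ⟨k - 1, by omega⟩
                    simpa using hvs k'
                  rw [← evk, ← e2]
                  exact ⟨hsym _ _ (by rw [har]; rfl), hnar⟩
                · have hgi : g i = f (i + 1) := by simp [hg, h2]
                  have hgi1 : g (i + 1) = f (i + 2) := by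
                    have h3 : ¬ (i + 1 ≤ k - 1) := by omega
                    simp [hg, h3]
                  rw [hgi, hgi1]
                  exact hch (i + 1) (by omega)
    have hv1 : v 1 = y := by rw [hvs 0, hf0]
    refine inner m 1 (by omega) le_rfl ?_ ?_ ?_
    · rw [hv1]
    · show P.mark (v 1) (v 0) = some Mark.arrow
      rw [hv1, hv0]; exact hyx
    · show P.mark (v 0) (v 1) ≠ some Mark.arrow
      rw [hv1, hv0]; exact hxy

/-- Edge of `P` between nodes of `D` with no arrowhead at its earlier endpoint. -/
def Stmt19Qd (P : MixedGraph N) (D : Set N) (x y : N) : Prop :=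
  x ∈ D ∧ y ∈ D ∧ (P.mark x y).isSome ∧ P.mark x y ≠ some Mark.arrow

/-- Edge of `P` between nodes of `D` with no arrowhead at either endpoint. -/
def Stmt19NAd (P : MixedGraph N) (D : Set N) (x y : N) : Prop :=
  x ∈ D ∧ y ∈ D ∧ (P.mark x y).isSome ∧
    P.mark x y ≠ some Mark.arrow ∧ P.mark y x ≠ some Mark.arrow

lemma stmt19_rtg_chain {r : N → N → Prop} {a b : N} (h : Relation.ReflTransGen r a b) :
    ∃ (m : ℕ) (f : ℕ → N), f 0 = a ∧ f m = b ∧ ∀ i < m, r (f i) (f (i + 1)) := by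
  induction h with
  | refl => exact ⟨0, fun _ => a, rfl, rfl, by omega⟩
  | @tail b c h1 h2 ih =>
    obtain ⟨m, f, hf0, hfm, hch⟩ := ih
    refine ⟨m + 1, fun i => if i ≤ m then f i else c, by simp [hf0], by simp, ?_⟩
    intro i hi
    by_cases h3 : i + 1 ≤ m
    · have h4 : i ≤ m := by omega
      simpa [h3, h4] using hch i (by omega)
    · have h4 : i = m := by omega
      subst h4
      simp [h3, hfm]
      exact h2

lemma stmt19_chain_rtg {r : N → N → Prop} :
    ∀ (m : ℕ) (f : ℕ → N), (∀ i < m, r (f i) (f (i + 1))) →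
      Relation.ReflTransGen r (f 0) (f m) := by
  intro m
  induction m with
  | zero => intro f _; exact Relation.ReflTransGen.refl
  | succ m ih =>
    intro f h
    exact (ih f (fun i hi => h i (by omega))).tail (h m (by omega))

lemma stmt19_core {P : MixedGraph N} (hP : IsISOPAG P) {D : Set N} {a b : N}
    (hab : Relation.ReflTransGen (Stmt19Qd P D) a b) :
    Relation.ReflTransGen (Stmt19Qd P D) b a →
      Relation.ReflTransGen (Stmt19NAd P D) a b := by
  induction hab using Relation.ReflTransGen.head_induction_on with
  | refl => intro _; exact Relation.ReflTransGen.refl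
  | head hac hcb ih =>
    intro hba
    have hbc := hba.tail hac
    have hNA := ih hbc
    refine Relation.ReflTransGen.head ?_ hNA
    obtain ⟨haD, hcD, hsome, hna⟩ := hac
    refine ⟨haD, hcD, hsome, hna, ?_⟩
    intro hca
    have hchain : Relation.ReflTransGen
        (fun x y => (P.mark x y).isSome ∧ P.mark x y ≠ some Mark.arrow) _ _ :=
      Relation.ReflTransGen.mono (fun x y h => ⟨h.2.2.1, h.2.2.2⟩) _ _ (hcb.trans hba)
    obtain ⟨m, f, hf0, hfm, hch⟩ := stmt19_rtg_chain hchain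
    exact stmt19_noQCycle hP m _ _ f hf0 hfm hch hca hna

lemma stmt19_NAd_symm {P : MixedGraph N} (hP : IsISOPAG P) {D : Set N} {x y : N}
    (h : Stmt19NAd P D x y) : Stmt19NAd P D y x :=
  ⟨h.2.1, h.1, hP.1.1.2.2.2.1 x y h.2.2.1, h.2.2.2.2, h.2.2.2.1⟩

lemma stmt19_rtg_NAd_symm {P : MixedGraph N} (hP : IsISOPAG P) {D : Set N} {a b : N}
    (h : Relation.ReflTransGen (Stmt19NAd P D) a b) :
    Relation.ReflTransGen (Stmt19NAd P D) b a := by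
  induction h with
  | refl => exact Relation.ReflTransGen.refl
  | tail h1 h2 ih => exact Relation.ReflTransGen.head (stmt19_NAd_symm hP h2) ih

lemma stmt19_induce_mark {P : MixedGraph N} {D : Set N} {x y : N}
    (h : ((P.induce D).mark x y).isSome) :
    x ∈ D ∧ y ∈ D ∧ (P.induce D).mark x y = P.mark x y := by
  by_cases hc : x ∈ D ∧ y ∈ D
  · refine ⟨hc.1, hc.2, ?_⟩
    show (if x ∈ D ∧ y ∈ D then P.mark x y else none) = P.mark x y
    rw [if_pos hc]
  · exfalso
    have h0 : (P.induce D).mark x y = none := by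
      show (if x ∈ D ∧ y ∈ D then P.mark x y else none) = none
      rw [if_neg hc]
    rw [h0] at h
    simp at h

lemma stmt19_induce_mark_eq {P : MixedGraph N} {D : Set N} {x y : N}
    (hx : x ∈ D) (hy : y ∈ D) : (P.induce D).mark x y = P.mark x y := by
  show (if x ∈ D ∧ y ∈ D then P.mark x y else none) = P.mark x y
  rw [if_pos ⟨hx, hy⟩]

lemma stmt19_sb_to_rtg {P : MixedGraph N} {D : Set N} {a b : N}
    (h : (P.induce D).SameBucket a b) :
    Relation.ReflTransGen (Stmt19NAd P D) a b := by
  obtain ⟨w, hpath, hfst, hlst, hmk⟩ := h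
  have hstep : ∀ i < w.len, Stmt19NAd P D (w.f i) (w.f (i + 1)) := by
    intro i hi
    have hadj := w.hadj i hi
    obtain ⟨h1, h2, h3⟩ := stmt19_induce_mark hadj
    have h4 := stmt19_induce_mark_eq (P := P) (D := D) h2 h1
    refine ⟨h1, h2, by rw [← h3]; exact hadj, ?_, ?_⟩
    · rw [← h3]; exact (hmk i hi).1
    · rw [← h4]; exact (hmk i hi).2
  have := stmt19_chain_rtg w.len w.f hstep
  rwa [show w.f 0 = a from hfst, show w.f w.len = b from hlst] at this

lemma stmt19_chain_sb {P : MixedGraph N} {D : Set N} :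
    ∀ (m : ℕ) (f : ℕ → N), (∀ i < m, Stmt19NAd P D (f i) (f (i + 1))) →
      (P.induce D).SameBucket (f 0) (f m) := by
  intro m
  induction m using Nat.strong_induction_on with
  | _ m IH =>
  intro f hch
  by_cases hrep : ∃ i j, i < j ∧ j ≤ m ∧ f i = f j
  · obtain ⟨i, j, hij, hjm, hfij⟩ := hrep
    set g : ℕ → N := fun k => if k ≤ i then f k else f (k + (j - i)) with hg
    have h0 : g 0 = f 0 := by simp [hg]
    have hlast : g (m - (j - i)) = f m := by
      by_cases hle : m - (j - i) ≤ i
      · have h1 : m - (j - i) = i := by omega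
        have h2 : m = j := by omega
        simp [hg, hle, h1]
        rw [hfij, h2]
      · simp [hg, hle]
        congr 1
        omega
    have hch' : ∀ k < m - (j - i), Stmt19NAd P D (g k) (g (k + 1)) := by
      intro k hk
      by_cases h1 : k + 1 ≤ i
      · have h2 : k ≤ i := by omega
        simpa [hg, h1, h2] using hch k (by omega)
      · by_cases h2 : k ≤ i
        · have hki : k = i := by omega
          have hgk : g k = f j := by
            subst hki
            simp [hg, hfij]
          have hgk1 : g (k + 1) = f (j + 1) := by
            simp [hg, h1]
            congr 1
            omega
          rw [hgk, hgk1]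
          exact hch j (by omega)
        · have hgk : g k = f (k + (j - i)) := by simp [hg, h2]
          have hgk1 : g (k + 1) = f (k + 1 + (j - i)) := by
            simp [hg, h1]
          rw [hgk, hgk1]
          have : k + (j - i) + 1 = k + 1 + (j - i) := by omega
          rw [← this]
          exact hch (k + (j - i)) (by omega)
    have hres := IH (m - (j - i)) (by omega) g hch'
    rwa [h0, hlast] at hres
  · push_neg at hrep
    refine ⟨⟨m, f, ?_⟩, ?_, rfl, rfl, ?_⟩
    · intro i hi
      have h := hch i hi
      show ((P.induce D).mark (f i) (f (i + 1))).isSome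
      rw [stmt19_induce_mark_eq h.1 h.2.1]
      exact h.2.2.1
    · intro i hile j hjle hf
      rcases lt_trichotomy i j with h | h | h
      · exact absurd hf (hrep i j h hjle)
      · exact h
      · exact absurd hf.symm (hrep j i h hile)
    · intro i hi
      have h := hch i hi
      constructor
      · show (P.induce D).mark (f i) (f (i + 1)) ≠ some Mark.arrow
        rw [stmt19_induce_mark_eq h.1 h.2.1]
        exact h.2.2.2.1
      · show (P.induce D).mark (f (i + 1)) (f i) ≠ some Mark.arrow
        rw [stmt19_induce_mark_eq h.2.1 h.1]
        exact h.2.2.2.2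

lemma stmt19_rtg_to_sb {P : MixedGraph N} {D : Set N} {a b : N}
    (h : Relation.ReflTransGen (Stmt19NAd P D) a b) :
    (P.induce D).SameBucket a b := by
  obtain ⟨m, f, hf0, hfm, hch⟩ := stmt19_rtg_chain h
  have := stmt19_chain_sb m f hch
  rwa [hf0, hfm] at this

lemma stmt19_sb_refl (G : MixedGraph N) (a : N) : G.SameBucket a a :=
  ⟨⟨0, fun _ => a, fun i hi => absurd hi (Nat.not_lt_zero i)⟩,
    fun i hi j hj _ => by
      rw [Nat.le_zero.mp hi, Nat.le_zero.mp hj],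
    rfl, rfl, fun i hi => absurd hi (Nat.not_lt_zero i)⟩

lemma stmt19_bucket_eq {P : MixedGraph N} (hP : IsISOPAG P) {D : Set N}
    {Bk1 Bk2 : Set N} (h1 : IsBucket (P.induce D) Bk1) (h2 : IsBucket (P.induce D) Bk2)
    {a b : N} (ha : a ∈ Bk1) (hb : b ∈ Bk2)
    (hab : Relation.ReflTransGen (Stmt19NAd P D) a b) : Bk1 = Bk2 := by
  obtain ⟨α, hαn, hBk1⟩ := h1
  obtain ⟨β, hβn, hBk2⟩ := h2
  have haα : Relation.ReflTransGen (Stmt19NAd P D) a α :=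
    stmt19_sb_to_rtg (by rw [hBk1] at ha; exact ha)
  have hbβ : Relation.ReflTransGen (Stmt19NAd P D) b β :=
    stmt19_sb_to_rtg (by rw [hBk2] at hb; exact hb)
  have hαβ : Relation.ReflTransGen (Stmt19NAd P D) α β :=
    ((stmt19_rtg_NAd_symm hP haα).trans hab).trans hbβ
  rw [hBk1, hBk2]
  ext x
  simp only [Set.mem_setOf_eq]
  constructor
  · intro hx
    exact stmt19_rtg_to_sb ((stmt19_sb_to_rtg hx).trans hαβ)
  · intro hx
    exact stmt19_rtg_to_sb ((stmt19_sb_to_rtg hx).trans (stmt19_rtg_NAd_symm hP hαβ))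

lemma stmt19_potDir_Qd {P : MixedGraph N} {D : Set N} {x y : N}
    (h : (P.induce D).potDir x y) : Stmt19Qd P D x y := by
  obtain ⟨hadj, hna, _⟩ := h
  obtain ⟨h1, h2, h3⟩ := stmt19_induce_mark hadj
  exact ⟨h1, h2, by rw [← h3]; exact hadj, by rw [← h3]; exact hna⟩

lemma stmt19_NAd_Qd {P : MixedGraph N} {D : Set N} {x y : N}
    (h : Stmt19NAd P D x y) : Stmt19Qd P D x y :=
  ⟨h.1, h.2.1, h.2.2.1, h.2.2.2.1⟩

/-- Key lemma: mutually potentially-ancestral nodes of distinct buckets are impossible. -/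
lemma stmt19_key {P : MixedGraph N} (hP : IsISOPAG P) {D : Set N} {Bk1 Bk2 : Set N}
    (h1 : IsBucket (P.induce D) Bk1) (h2 : IsBucket (P.induce D) Bk2) (hne : Bk1 ≠ Bk2)
    {a b b2 a2 : N} (ha : a ∈ Bk1) (hb : b ∈ Bk2) (hab : (P.induce D).poAn a b)
    (hb2 : b2 ∈ Bk2) (ha2 : a2 ∈ Bk1) (hba : (P.induce D).poAn b2 a2) : False := by
  have hQab : Relation.ReflTransGen (Stmt19Qd P D) a b :=
    Relation.ReflTransGen.mono (fun x y h => stmt19_potDir_Qd h) _ _ hab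
  have hQb2a2 : Relation.ReflTransGen (Stmt19Qd P D) b2 a2 :=
    Relation.ReflTransGen.mono (fun x y h => stmt19_potDir_Qd h) _ _ hba
  -- bucket connectors
  obtain ⟨β, hβn, hBk2⟩ := h2
  have hbb2 : Relation.ReflTransGen (Stmt19NAd P D) b b2 :=
    (stmt19_sb_to_rtg (by rw [hBk2] at hb; exact hb)).trans
      (stmt19_rtg_NAd_symm hP (stmt19_sb_to_rtg (by rw [hBk2] at hb2; exact hb2)))
  obtain ⟨α, hαn, hBk1⟩ := h1
  have ha2a : Relation.ReflTransGen (Stmt19NAd P D) a2 a :=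
    (stmt19_sb_to_rtg (by rw [hBk1] at ha2; exact ha2)).trans
      (stmt19_rtg_NAd_symm hP (stmt19_sb_to_rtg (by rw [hBk1] at ha; exact ha)))
  have hQba : Relation.ReflTransGen (Stmt19Qd P D) b a :=
    ((Relation.ReflTransGen.mono (fun x y h => stmt19_NAd_Qd h) _ _ hbb2).trans hQb2a2).trans
      (Relation.ReflTransGen.mono (fun x y h => stmt19_NAd_Qd h) _ _ ha2a)
  have hNA := stmt19_core hP hQab hQba
  exact hne (stmt19_bucket_eq hP ⟨α, hαn, hBk1⟩ ⟨β, hβn, hBk2⟩ ha hb hNA)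

end Stmt19Aux

/-- Let `P` be an iSOPAG and `D ⊆ I ∪ V`.  There exists a strict
partial order on the buckets of `P_D` such that `𝔸 ≺ 𝔹` whenever
`𝔸 ⊆ PoAn_{P_D}(𝔹)` for distinct buckets `𝔸, 𝔹`; in particular, it cannot happen
simultaneously that a potentially directed path runs from a node of `𝔸` to a node
of `𝔹` and one runs from a node of `𝔹` to a node of `𝔸`. -/
theorem statement19 {N : Type} (P : MixedGraph N) (hP : IsISOPAG P)
    (D : Set N) (hD : D ⊆ P.nodes) :
    (∃ lt : Set N → Set N → Prop,
      (∀ X, ¬ lt X X) ∧ (∀ X Y Z, lt X Y → lt Y Z → lt X Z) ∧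
      (∀ Bk1 Bk2 : Set N, IsBucket (P.induce D) Bk1 → IsBucket (P.induce D) Bk2 →
        Bk1 ≠ Bk2 → Bk1 ⊆ (P.induce D).poAnSet Bk2 → lt Bk1 Bk2)) ∧
    (∀ Bk1 Bk2 : Set N, IsBucket (P.induce D) Bk1 → IsBucket (P.induce D) Bk2 →
      Bk1 ≠ Bk2 →
      ¬ ((∃ a ∈ Bk1, ∃ b ∈ Bk2, (P.induce D).poAn a b) ∧
          (∃ b ∈ Bk2, ∃ a ∈ Bk1, (P.induce D).poAn b a))) := by
  constructor
  · refine ⟨Relation.TransGen (fun X Y => IsBucket (P.induce D) X ∧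
      IsBucket (P.induce D) Y ∧ X ≠ Y ∧ X ⊆ (P.induce D).poAnSet Y), ?_, ?_, ?_⟩
    · -- irreflexivity
      intro X hX
      rcases Relation.TransGen.head'_iff.mp hX with ⟨B, hXB, hBX⟩
      have hsub : B ⊆ (P.induce D).poAnSet X := by
        clear hXB
        induction hBX using Relation.ReflTransGen.head_induction_on with
        | refl => exact fun u hu => ⟨u, hu, Relation.ReflTransGen.refl⟩
        | head h _ ih2 =>
          intro u hu
          obtain ⟨w, hw, hpo⟩ := h.2.2.2 hu
          obtain ⟨v, hv, hpo2⟩ := ih2 hw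
          exact ⟨v, hv, hpo.trans hpo2⟩
      obtain ⟨hX1, hB1, hne, hXsub⟩ := hXB
      obtain ⟨α, hαn, hXeq⟩ := hX1
      have hαX : α ∈ X := by rw [hXeq]; exact stmt19_sb_refl _ α
      obtain ⟨b, hbB, hpo⟩ := hXsub hαX
      obtain ⟨a2, ha2X, hpo2⟩ := hsub hbB
      exact stmt19_key hP ⟨α, hαn, hXeq⟩ hB1 hne hαX hbB hpo hbB ha2X hpo2
    · exact fun X Y Z h1 h2 => h1.trans h2
    · intro Bk1 Bk2 h1 h2 hne hsub
      exact Relation.TransGen.single ⟨h1, h2, hne, hsub⟩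
  · rintro Bk1 Bk2 h1 h2 hne ⟨⟨a, ha, b, hb, hab⟩, ⟨b2, hb2, a2, ha2, hba⟩⟩
    exact stmt19_key hP h1 h2 hne ha hb hab hb2 ha2 hba

end
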